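/- Let G = (V,E) be a finite simple graph and let x ≥ 0 be an integer. For every subset S of the vertex set of the subdivided graph G^x, letting c be the number of edges of G^x with exactly one endpoint in S, there exists a subset S' ⊆ V such that the number of edges of G with exactly one endpoint in S' is at least c − 2x·|E|. -/

import Mathlib

open scoped Classical

/-- The vertex set of the `(2x+1)`-subdivision `G^x` of `G`: the original vertices
together with, for each edge of `G` (recorded as the ordered pair `(u, v)` with
`u < v` and `G.Adj u v`), the `2x` internal path vertices. -/
abbrev SubVert {V : Type} [LinearOrder V] (G : SimpleGraph V) (x : ℕ) : Type :=
  V ⊕ {p : V × V × Fin (2 * x) // p.1 < p.2.1 ∧ G.Adj p.1 p.2.1}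

/-- The `(2x+1)`-subdivision `G^x` of `G`: each edge `{u, v}` of `G` is replaced by the
path `(u, w_{e,1}, …, w_{e,2x}, v)` of length `2x+1` through `2x` new internal vertices
(in particular `G^0 = G`). -/
def Subdiv {V : Type} [LinearOrder V] (G : SimpleGraph V) (x : ℕ) :
    SimpleGraph (SubVert G x) where
  Adj a b :=
    match a, b with
    | Sum.inl u, Sum.inl v => x = 0 ∧ G.Adj u v
    | Sum.inl a, Sum.inr p =>
        (a = p.1.1 ∧ (p.1.2.2 : ℕ) = 0) ∨ (a = p.1.2.1 ∧ (p.1.2.2 : ℕ) = 2 * x - 1)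
    | Sum.inr p, Sum.inl a =>
        (a = p.1.1 ∧ (p.1.2.2 : ℕ) = 0) ∨ (a = p.1.2.1 ∧ (p.1.2.2 : ℕ) = 2 * x - 1)
    | Sum.inr p, Sum.inr q =>
        p.1.1 = q.1.1 ∧ p.1.2.1 = q.1.2.1 ∧
          ((p.1.2.2 : ℕ) + 1 = (q.1.2.2 : ℕ) ∨ (q.1.2.2 : ℕ) + 1 = (p.1.2.2 : ℕ))
  symm := by
    constructor
    rintro (u | p) (v | q) h
    · exact ⟨h.1, h.2.symm⟩
    · exact h
    · exact h
    · exact ⟨h.1.symm, h.2.1.symm, h.2.2.symm⟩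
  loopless := by
    constructor
    rintro (u | p) h
    · exact G.loopless.irrefl u h.2
    · obtain ⟨-, -, h | h⟩ := h <;> omega

/-- The number of edges of `G` with exactly one endpoint in `S`, counted as the number of
ordered adjacent pairs `(u, v)` with `u ∈ S` and `v ∉ S`. -/
noncomputable def cutCard {V : Type} [Fintype V] (G : SimpleGraph V) (S : Finset V) : ℕ :=
  (Finset.univ.filter fun p : V × V => G.Adj p.1 p.2 ∧ p.1 ∈ S ∧ p.2 ∉ S).card

namespace Aux

variable {V : Type} [LinearOrder V] (G : SimpleGraph V) (x : ℕ)

def F (a b : SubVert G x) : V × V :=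
  match a, b with
  | Sum.inl u, Sum.inl v => if u < v then (u, v) else (v, u)
  | Sum.inl _, Sum.inr q => (q.1.1, q.1.2.1)
  | Sum.inr q, _ => (q.1.1, q.1.2.1)

def pathV (p : V × V) (hp : p.1 < p.2 ∧ G.Adj p.1 p.2) (i : ℕ) : SubVert G x :=
  if h : 1 ≤ i ∧ i ≤ 2 * x then Sum.inr ⟨(p.1, p.2, ⟨i - 1, by omega⟩), hp⟩
  else if i = 0 then Sum.inl p.1 else Sum.inl p.2

lemma pathV_zero (p : V × V) (hp) : pathV G x p hp 0 = Sum.inl p.1 := by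
  simp [pathV]

lemma pathV_last (p : V × V) (hp) : pathV G x p hp (2 * x + 1) = Sum.inl p.2 := by
  simp [pathV]

lemma pathV_mid (p : V × V) (hp) (i : ℕ) (h1 : 1 ≤ i) (h2 : i ≤ 2 * x) :
    pathV G x p hp i = Sum.inr ⟨(p.1, p.2, ⟨i - 1, by omega⟩), hp⟩ := by
  simp [pathV, h1, h2]

def idx (a b : SubVert G x) : ℕ :=
  match a, b with
  | Sum.inl _, Sum.inl _ => 0
  | Sum.inl _, Sum.inr q => if (q.1.2.2 : ℕ) = 0 then 0 else 2 * x
  | Sum.inr q, Sum.inl _ => if (q.1.2.2 : ℕ) = 0 then 0 else 2 * x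
  | Sum.inr q, Sum.inr r => min (q.1.2.2 : ℕ) (r.1.2.2 : ℕ) + 1

lemma inr_eq (q : {p : V × V × Fin (2 * x) // p.1 < p.2.1 ∧ G.Adj p.1 p.2.1})
    (u v : V) (j : Fin (2 * x)) (h : (u, v, j).1 < (u, v, j).2.1 ∧ G.Adj u v)
    (h1 : q.1.1 = u) (h2 : q.1.2.1 = v) (h3 : (q.1.2.2 : ℕ) = (j : ℕ)) :
    (Sum.inr q : SubVert G x) = Sum.inr ⟨(u, v, j), h⟩ := by
  congr 1
  exact Subtype.ext (Prod.ext h1 (Prod.ext h2 (Fin.ext h3)))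

lemma key (a b : SubVert G x) (h : (Subdiv G x).Adj a b) (p : V × V)
    (hp : p.1 < p.2 ∧ G.Adj p.1 p.2) (hF : F G x a b = p) :
    idx G x a b ≤ 2 * x ∧
    ((a = pathV G x p hp (idx G x a b) ∧ b = pathV G x p hp (idx G x a b + 1)) ∨
     (b = pathV G x p hp (idx G x a b) ∧ a = pathV G x p hp (idx G x a b + 1))) := by
  rcases a with u | q <;> rcases b with v | r
  · -- inl inl
    obtain ⟨hx0, hadj⟩ := h
    refine ⟨by simp [idx], ?_⟩
    simp only [F] at hF
    simp only [idx]
    by_cases huv : u < v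
    · rw [if_pos huv] at hF
      left
      subst hF hx0
      rw [pathV_zero, pathV_last G 0 (u, v) hp]
      exact ⟨rfl, rfl⟩
    · rw [if_neg huv] at hF
      right
      subst hF hx0
      rw [pathV_zero, pathV_last G 0 (v, u) hp]
      exact ⟨rfl, rfl⟩
  · -- inl inr
    simp only [F] at hF
    have hx : 1 ≤ x := by have := r.1.2.2.2; omega
    have hr2x := r.1.2.2.2
    simp only [Subdiv] at h
    rcases h with ⟨he, hi⟩ | ⟨he, hi⟩
    · refine ⟨by simp [idx, hi], ?_⟩
      left
      simp only [idx, hi, if_pos]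
      constructor
      · rw [pathV_zero]; rw [← hF]; exact congrArg Sum.inl he
      · rw [pathV_mid G x p hp 1 le_rfl (by omega)]
        exact inr_eq G x r p.1 p.2 ⟨1 - 1, by omega⟩ _ (by rw [← hF]) (by rw [← hF])
          (by simp only [Fin.val_mk]; omega)
    · have hne : (r.1.2.2 : ℕ) ≠ 0 := by omega
      refine ⟨by simp [idx, hne], ?_⟩
      right
      simp only [idx, hne, if_neg, ite_false]
      constructor
      · rw [pathV_mid G x p hp (2 * x) (by omega) le_rfl]
        exact inr_eq G x r p.1 p.2 ⟨2 * x - 1, by omega⟩ _ (by rw [← hF]) (by rw [← hF])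
          (by simp only [Fin.val_mk]; omega)
      · rw [pathV_last]; rw [← hF]; exact congrArg Sum.inl he
  · -- inr inl
    simp only [F] at hF
    have hx : 1 ≤ x := by have := q.1.2.2.2; omega
    have hq2x := q.1.2.2.2
    simp only [Subdiv] at h
    rcases h with ⟨he, hi⟩ | ⟨he, hi⟩
    · refine ⟨by simp [idx, hi], ?_⟩
      right
      simp only [idx, hi, if_pos]
      constructor
      · rw [pathV_zero]; rw [← hF]; exact congrArg Sum.inl he
      · rw [pathV_mid G x p hp 1 le_rfl (by omega)]
        exact inr_eq G x q p.1 p.2 ⟨1 - 1, by omega⟩ _ (by rw [← hF]) (by rw [← hF])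
          (by simp only [Fin.val_mk]; omega)
    · have hne : (q.1.2.2 : ℕ) ≠ 0 := by omega
      refine ⟨by simp [idx, hne], ?_⟩
      left
      simp only [idx, hne, if_neg, ite_false]
      constructor
      · rw [pathV_mid G x p hp (2 * x) (by omega) le_rfl]
        exact inr_eq G x q p.1 p.2 ⟨2 * x - 1, by omega⟩ _ (by rw [← hF]) (by rw [← hF])
          (by simp only [Fin.val_mk]; omega)
      · rw [pathV_last]; rw [← hF]; exact congrArg Sum.inl he
  · -- inr inr
    simp only [F] at hF
    simp only [Subdiv] at h
    obtain ⟨h1, h2, h3 | h3⟩ := h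
    · have hq2x := q.1.2.2.2
      have hr2x := r.1.2.2.2
      refine ⟨by simp only [idx]; omega, ?_⟩
      left
      have hm : min (q.1.2.2 : ℕ) (r.1.2.2 : ℕ) = (q.1.2.2 : ℕ) := by omega
      simp only [idx, hm]
      constructor
      · rw [pathV_mid G x p hp ((q.1.2.2 : ℕ) + 1) (by omega) (by omega)]
        exact inr_eq G x q p.1 p.2 ⟨(q.1.2.2 : ℕ) + 1 - 1, by omega⟩ _ (by rw [← hF])
          (by rw [← hF]) (by simp only [Fin.val_mk]; omega)
      · rw [pathV_mid G x p hp ((q.1.2.2 : ℕ) + 1 + 1) (by omega) (by omega)]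
        exact inr_eq G x r p.1 p.2 ⟨(q.1.2.2 : ℕ) + 1 + 1 - 1, by omega⟩ _
          (by rw [← hF, h1]) (by rw [← hF, h2]) (by simp only [Fin.val_mk]; omega)
    · have hq2x := q.1.2.2.2
      have hr2x := r.1.2.2.2
      refine ⟨by simp only [idx]; omega, ?_⟩
      right
      have hm : min (q.1.2.2 : ℕ) (r.1.2.2 : ℕ) = (r.1.2.2 : ℕ) := by omega
      simp only [idx, hm]
      constructor
      · rw [pathV_mid G x p hp ((r.1.2.2 : ℕ) + 1) (by omega) (by omega)]
        exact inr_eq G x r p.1 p.2 ⟨(r.1.2.2 : ℕ) + 1 - 1, by omega⟩ _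
          (by rw [← hF, h1]) (by rw [← hF, h2]) (by simp only [Fin.val_mk]; omega)
      · rw [pathV_mid G x p hp ((r.1.2.2 : ℕ) + 1 + 1) (by omega) (by omega)]
        exact inr_eq G x q p.1 p.2 ⟨(r.1.2.2 : ℕ) + 1 + 1 - 1, by omega⟩ _
          (by rw [← hF]) (by rw [← hF]) (by simp only [Fin.val_mk]; omega)

end Aux

namespace Aux
variable {V : Type} [LinearOrder V] (G : SimpleGraph V) (x : ℕ)

lemma changes_parity (f : ℕ → Bool) (n : ℕ) :
    ((Finset.range n).filter (fun i => f i ≠ f (i+1))).card % 2 =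
      (if f 0 = f n then 0 else 1) := by
  induction n with
  | zero => simp
  | succ n ih =>
    rw [Finset.range_add_one, Finset.filter_insert]
    by_cases h : f n ≠ f (n+1)
    · rw [if_pos h, Finset.card_insert_of_notMem (by simp)]
      cases hb : f n <;> cases hc : f (n+1) <;> cases hd : f 0 <;>
        simp_all <;> omega
    · rw [if_neg h]
      cases hb : f n <;> cases hc : f (n+1) <;> cases hd : f 0 <;> simp_all

lemma fiber_le [Fintype V] (S : Finset (SubVert G x)) (p : V × V)
    (hp : p.1 < p.2 ∧ G.Adj p.1 p.2) :
    (((Finset.univ.filter fun pr : SubVert G x × SubVert G x =>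
        (Subdiv G x).Adj pr.1 pr.2 ∧ pr.1 ∈ S ∧ pr.2 ∉ S).filter
        fun pr => F G x pr.1 pr.2 = p).card : ℕ) ≤
      2 * x + (if (Sum.inl p.1 ∈ S) = (Sum.inl p.2 ∈ S) then 0 else 1) := by
  set f : ℕ → Bool := fun i => decide (pathV G x p hp i ∈ S) with hf
  set T := (Finset.range (2 * x + 1)).filter (fun i => f i ≠ f (i + 1)) with hT
  have step1 : ((Finset.univ.filter fun pr : SubVert G x × SubVert G x =>
        (Subdiv G x).Adj pr.1 pr.2 ∧ pr.1 ∈ S ∧ pr.2 ∉ S).filter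
        fun pr => F G x pr.1 pr.2 = p).card ≤ T.card := by
    apply Finset.card_le_card_of_injOn (fun pr => idx G x pr.1 pr.2)
    · intro pr hpr
      simp only [Finset.mem_coe, Finset.mem_filter, Finset.mem_univ, true_and] at hpr
      obtain ⟨⟨hadj, h1, h2⟩, hF⟩ := hpr
      obtain ⟨hle, hk⟩ := key G x pr.1 pr.2 hadj p hp hF
      simp only [hT, Finset.mem_coe, Finset.mem_filter, Finset.mem_range]
      refine ⟨by omega, ?_⟩
      rcases hk with ⟨ha, hb⟩ | ⟨ha, hb⟩
      · simp only [hf, ← ha, ← hb, h1, h2]; simp [h2]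
      · simp only [hf, ← ha, ← hb, h1, h2]; simp [h2]
    · intro pr1 h1 pr2 h2 heq
      simp only [Finset.mem_coe, Finset.mem_filter, Finset.mem_univ, true_and] at h1 h2
      obtain ⟨⟨hadj1, ha1, hb1⟩, hF1⟩ := h1
      obtain ⟨⟨hadj2, ha2, hb2⟩, hF2⟩ := h2
      obtain ⟨-, hk1⟩ := key G x pr1.1 pr1.2 hadj1 p hp hF1
      obtain ⟨-, hk2⟩ := key G x pr2.1 pr2.2 hadj2 p hp hF2
      replace heq : idx G x pr1.1 pr1.2 = idx G x pr2.1 pr2.2 := heq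
      rw [heq] at hk1
      rcases hk1 with ⟨c1, c2⟩ | ⟨c1, c2⟩ <;> rcases hk2 with ⟨d1, d2⟩ | ⟨d1, d2⟩
      · exact Prod.ext (c1.trans d1.symm) (c2.trans d2.symm)
      · exact absurd (c1 ▸ ha1) (d1 ▸ hb2)
      · exact absurd (d1 ▸ ha2) (c1 ▸ hb1)
      · exact Prod.ext (c2.trans d2.symm) (c1.trans d1.symm)
  have hle : T.card ≤ 2 * x + 1 := by
    calc T.card ≤ (Finset.range (2 * x + 1)).card := Finset.card_filter_le _ _
      _ = 2 * x + 1 := Finset.card_range _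
  by_cases hS : (Sum.inl p.1 ∈ S) = (Sum.inl p.2 ∈ S)
  · rw [if_pos hS]
    have hpar := changes_parity f (2 * x + 1)
    have hends : f 0 = f (2 * x + 1) := by
      simp only [hf, pathV_zero, pathV_last, hS]
    rw [if_pos hends] at hpar
    rw [← hT] at hpar
    have h2x : T.card ≤ 2 * x := by omega
    omega
  · rw [if_neg hS]
    omega

end Aux

namespace Aux
variable {V : Type} [LinearOrder V] (G : SimpleGraph V) (x : ℕ)

lemma ecard [Fintype V] :
    (Finset.univ.filter fun p : V × V => p.1 < p.2 ∧ G.Adj p.1 p.2).card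
      = Nat.card G.edgeSet := by
  rw [Nat.card_eq_fintype_card, ← SimpleGraph.edgeFinset_card]
  apply Finset.card_bij (fun (p : V × V) _ => s(p.1, p.2))
  · intro p hp
    simp only [Finset.mem_filter] at hp
    simpa [SimpleGraph.mem_edgeFinset] using hp.2.2
  · intro p hp q hq h
    simp only [Finset.mem_filter] at hp hq
    rw [Sym2.mk_eq_mk_iff] at h
    rcases h with h | h
    · exact Prod.ext (congrArg Prod.fst h) (congrArg Prod.snd h)
    · simp only [Prod.swap] at h
      have h1 : p.1 = q.2 := congrArg Prod.fst h
      have h2 : p.2 = q.1 := congrArg Prod.snd h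
      have hh := hq.2.1
      rw [← h1, ← h2] at hh
      exact absurd hh (lt_asymm hp.2.1)
  · intro e he
    induction e using Sym2.ind with
    | _ a b =>
      rw [SimpleGraph.mem_edgeFinset] at he
      rcases lt_or_gt_of_ne (G.ne_of_adj he) with h | h
      · exact ⟨(a, b), Finset.mem_filter.2 ⟨Finset.mem_univ _, h, he⟩, rfl⟩
      · exact ⟨(b, a), Finset.mem_filter.2 ⟨Finset.mem_univ _, h, he.symm⟩,
          Sym2.eq_swap⟩

lemma F_mem (a b : SubVert G x) (h : (Subdiv G x).Adj a b) [Fintype V] :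
    F G x a b ∈ Finset.univ.filter fun p : V × V => p.1 < p.2 ∧ G.Adj p.1 p.2 := by
  rcases a with u | q <;> rcases b with v | r
  · obtain ⟨-, hadj⟩ := h
    simp only [F, Finset.mem_filter, Finset.mem_univ, true_and]
    by_cases huv : u < v
    · rw [if_pos huv]; exact ⟨huv, hadj⟩
    · rw [if_neg huv]
      exact ⟨lt_of_le_of_ne (not_lt.1 huv) (G.ne_of_adj hadj).symm, hadj.symm⟩
  · simp only [F, Finset.mem_filter, Finset.mem_univ, true_and]; exact r.2
  · simp only [F, Finset.mem_filter, Finset.mem_univ, true_and]; exact q.2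
  · simp only [F, Finset.mem_filter, Finset.mem_univ, true_and]; exact q.2

lemma minmax_eq (a b : V) (p : V × V) (hne : a ≠ b)
    (h : (min a b, max a b) = p) :
    (a = p.1 ∧ b = p.2) ∨ (a = p.2 ∧ b = p.1) := by
  have h1 : min a b = p.1 := congrArg Prod.fst h
  have h2 : max a b = p.2 := congrArg Prod.snd h
  rcases le_total a b with hab | hab
  · left
    rw [min_eq_left hab] at h1
    rw [max_eq_right hab] at h2
    exact ⟨h1, h2⟩
  · right
    rw [min_eq_right hab] at h1
    rw [max_eq_left hab] at h2
    exact ⟨h2, h1⟩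

end Aux

open Aux in
theorem stmt_8' {V : Type} [Fintype V] [LinearOrder V] (G : SimpleGraph V) (x : ℕ)
    (S : Finset (SubVert G x)) :
    ∃ S' : Finset V,
      ((Finset.univ.filter fun p : SubVert G x × SubVert G x =>
          (Subdiv G x).Adj p.1 p.2 ∧ p.1 ∈ S ∧ p.2 ∉ S).card : ℤ)
        - 2 * x * Nat.card G.edgeSet ≤
        (Finset.univ.filter fun p : V × V =>
          G.Adj p.1 p.2 ∧ p.1 ∈ (Finset.univ.filter fun v => Sum.inl v ∈ S)
            ∧ p.2 ∉ (Finset.univ.filter fun v => Sum.inl v ∈ S)).card := by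
  classical
  set E' := Finset.univ.filter fun p : V × V => p.1 < p.2 ∧ G.Adj p.1 p.2 with hE'
  set S' : Finset V := Finset.univ.filter fun v => Sum.inl v ∈ S with hS'
  refine ⟨S', ?_⟩
  -- Step A
  have hA : (Finset.univ.filter fun p : SubVert G x × SubVert G x =>
      (Subdiv G x).Adj p.1 p.2 ∧ p.1 ∈ S ∧ p.2 ∉ S).card
      = ∑ p ∈ E', ((Finset.univ.filter fun pr : SubVert G x × SubVert G x =>
          (Subdiv G x).Adj pr.1 pr.2 ∧ pr.1 ∈ S ∧ pr.2 ∉ S).filter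
          fun pr => F G x pr.1 pr.2 = p).card := by
    apply Finset.card_eq_sum_card_fiberwise
    intro pr hpr
    simp only [Finset.mem_coe, Finset.mem_filter, Finset.mem_univ, true_and] at hpr
    exact F_mem G x pr.1 pr.2 hpr.1
  -- Step B
  have hB : (Finset.univ.filter fun p : V × V =>
      G.Adj p.1 p.2 ∧ p.1 ∈ S' ∧ p.2 ∉ S').card
      = ∑ p ∈ E', ((Finset.univ.filter fun pr : V × V =>
          G.Adj pr.1 pr.2 ∧ pr.1 ∈ S' ∧ pr.2 ∉ S').filter
          fun pr => (min pr.1 pr.2, max pr.1 pr.2) = p).card := by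
    apply Finset.card_eq_sum_card_fiberwise
    intro pr hpr
    simp only [Finset.mem_coe, Finset.mem_filter, Finset.mem_univ, true_and] at hpr
    have hne := G.ne_of_adj hpr.1
    simp only [hE', Finset.mem_coe, Finset.mem_filter, Finset.mem_univ, true_and]
    rcases le_total pr.1 pr.2 with hab | hab
    · rw [min_eq_left hab, max_eq_right hab]
      exact ⟨lt_of_le_of_ne hab hne, hpr.1⟩
    · rw [min_eq_right hab, max_eq_left hab]
      exact ⟨lt_of_le_of_ne hab (Ne.symm hne), hpr.1.symm⟩
  -- Step C: each B-fiber equals the indicator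
  have hC : ∀ p ∈ E', ((Finset.univ.filter fun pr : V × V =>
      G.Adj pr.1 pr.2 ∧ pr.1 ∈ S' ∧ pr.2 ∉ S').filter
      fun pr => (min pr.1 pr.2, max pr.1 pr.2) = p).card
      = (if (Sum.inl p.1 ∈ S) = (Sum.inl p.2 ∈ S) then 0 else 1) := by
    intro p hp
    simp only [hE', Finset.mem_filter, Finset.mem_univ, true_and] at hp
    have hmemS' : ∀ v : V, v ∈ S' ↔ (Sum.inl v : SubVert G x) ∈ S := by
      intro v; simp [hS']
    by_cases h1 : (Sum.inl p.1 : SubVert G x) ∈ S <;>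
      by_cases h2 : (Sum.inl p.2 : SubVert G x) ∈ S
    · rw [if_pos (by simp [h1, h2])]
      rw [Finset.card_eq_zero, Finset.eq_empty_iff_forall_notMem]
      intro pr hpr
      simp only [Finset.mem_filter, Finset.mem_univ, true_and] at hpr
      obtain ⟨⟨hadj, hm1, hm2⟩, hmm⟩ := hpr
      rcases minmax_eq pr.1 pr.2 p (G.ne_of_adj hadj) hmm with ⟨e1, e2⟩ | ⟨e1, e2⟩
      · exact hm2 ((hmemS' _).2 (e2 ▸ h2))
      · exact hm2 ((hmemS' _).2 (e2 ▸ h1))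
    · rw [if_neg (by simp [h1, h2])]
      rw [Finset.card_eq_one]
      refine ⟨(p.1, p.2), ?_⟩
      ext pr
      simp only [Finset.mem_filter, Finset.mem_univ, true_and, Finset.mem_singleton]
      constructor
      · rintro ⟨⟨hadj, hm1, hm2⟩, hmm⟩
        rcases minmax_eq pr.1 pr.2 p (G.ne_of_adj hadj) hmm with ⟨e1, e2⟩ | ⟨e1, e2⟩
        · exact Prod.ext e1 e2
        · exact absurd ((hmemS' _).1 (e1 ▸ hm1)) h2
      · rintro rfl
        refine ⟨⟨hp.2, (hmemS' _).2 h1, fun hc => h2 ((hmemS' _).1 hc)⟩, ?_⟩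
        rw [min_eq_left (le_of_lt hp.1), max_eq_right (le_of_lt hp.1)]
    · rw [if_neg (by simp [h1, h2])]
      rw [Finset.card_eq_one]
      refine ⟨(p.2, p.1), ?_⟩
      ext pr
      simp only [Finset.mem_filter, Finset.mem_univ, true_and, Finset.mem_singleton]
      constructor
      · rintro ⟨⟨hadj, hm1, hm2⟩, hmm⟩
        rcases minmax_eq pr.1 pr.2 p (G.ne_of_adj hadj) hmm with ⟨e1, e2⟩ | ⟨e1, e2⟩
        · exact absurd ((hmemS' _).1 (e1 ▸ hm1)) h1
        · exact Prod.ext e1 e2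
      · rintro rfl
        refine ⟨⟨hp.2.symm, (hmemS' _).2 h2, fun hc => h1 ((hmemS' _).1 hc)⟩, ?_⟩
        rw [min_eq_right (le_of_lt hp.1), max_eq_left (le_of_lt hp.1)]
    · rw [if_pos (by simp [h1, h2])]
      rw [Finset.card_eq_zero, Finset.eq_empty_iff_forall_notMem]
      intro pr hpr
      simp only [Finset.mem_filter, Finset.mem_univ, true_and] at hpr
      obtain ⟨⟨hadj, hm1, hm2⟩, hmm⟩ := hpr
      rcases minmax_eq pr.1 pr.2 p (G.ne_of_adj hadj) hmm with ⟨e1, e2⟩ | ⟨e1, e2⟩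
      · exact absurd ((hmemS' _).1 (e1 ▸ hm1)) h1
      · exact absurd ((hmemS' _).1 (e1 ▸ hm1)) h2
  -- combine
  have hmain : (Finset.univ.filter fun p : SubVert G x × SubVert G x =>
      (Subdiv G x).Adj p.1 p.2 ∧ p.1 ∈ S ∧ p.2 ∉ S).card ≤
      2 * x * E'.card + (Finset.univ.filter fun p : V × V =>
        G.Adj p.1 p.2 ∧ p.1 ∈ S' ∧ p.2 ∉ S').card := by
    rw [hA, hB]
    calc ∑ p ∈ E', ((Finset.univ.filter fun pr : SubVert G x × SubVert G x =>
          (Subdiv G x).Adj pr.1 pr.2 ∧ pr.1 ∈ S ∧ pr.2 ∉ S).filter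
          fun pr => F G x pr.1 pr.2 = p).card
        ≤ ∑ p ∈ E', (2 * x + (if (Sum.inl p.1 ∈ S) = (Sum.inl p.2 ∈ S) then 0 else 1)) := by
          apply Finset.sum_le_sum
          intro p hp
          simp only [hE', Finset.mem_filter, Finset.mem_univ, true_and] at hp
          exact fiber_le G x S p hp
      _ = 2 * x * E'.card + ∑ p ∈ E',
            (if (Sum.inl p.1 ∈ S) = (Sum.inl p.2 ∈ S) then 0 else 1) := by
          rw [Finset.sum_add_distrib, Finset.sum_const, smul_eq_mul, mul_comm]
      _ = 2 * x * E'.card + ∑ p ∈ E', ((Finset.univ.filter fun pr : V × V =>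
            G.Adj pr.1 pr.2 ∧ pr.1 ∈ S' ∧ pr.2 ∉ S').filter
            fun pr => (min pr.1 pr.2, max pr.1 pr.2) = p).card := by
          congr 1
          exact (Finset.sum_congr rfl hC).symm
  have hE := ecard G (V := V)
  rw [← hE'] at hE
  have := hmain
  rw [hE] at this
  have hz : ((Finset.univ.filter fun p : SubVert G x × SubVert G x =>
      (Subdiv G x).Adj p.1 p.2 ∧ p.1 ∈ S ∧ p.2 ∉ S).card : ℤ) ≤
      2 * x * Nat.card G.edgeSet + ((Finset.univ.filter fun p : V × V =>
        G.Adj p.1 p.2 ∧ p.1 ∈ S' ∧ p.2 ∉ S').card : ℤ) := by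
    exact_mod_cast this
  linarith

/-- For every vertex subset `S` of the subdivided graph `G^x`, if `c` is
the number of edges of `G^x` with exactly one endpoint in `S`, then there is a subset
`S' ⊆ V` such that the number of edges of `G` with exactly one endpoint in `S'` is at
least `c - 2x·|E|`. -/
theorem stmt_8 {V : Type} [Fintype V] [LinearOrder V] (G : SimpleGraph V) (x : ℕ)
    (S : Finset (SubVert G x)) :
    ∃ S' : Finset V,
      (cutCard (Subdiv G x) S : ℤ) - 2 * x * Nat.card G.edgeSet ≤ cutCard G S' := by
  obtain ⟨-, h⟩ := stmt_8' G x S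
  refine ⟨Finset.univ.filter (fun v => Sum.inl v ∈ S), ?_⟩
  unfold cutCard
  convert h using 4
  ext pr
  simp
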